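/- arXiv:2601.17922 — 4 statements merged into one kernel-verified Lean document; each statement's English description precedes it below -/
import Mathlib

section
/- For finite subsets A, B of an abelian group G and any z ∈ G, letting A(z) := A ∪ (z + B) and B(z) := A ∩ (z + B), we have |A(z)| + |B(z)| = |A| + |B|, and for every g ∈ G, r_{A, z+B}(g) = r_{A(z), B(z)}(g) + r_{A \ (z+B), (z+B) \ A}(g); in particular A(z) +_i B(z) ⊆ z + (A +_i B) for every i ≥ 1. -/
open Finset
open scoped Pointwise

def rAB {G : Type*} [AddCommGroup G] [DecidableEq G] (A B : Finset G) (g : G) : ℕ :=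
  ((A ×ˢ B).filter (fun p => p.1 + p.2 = g)).card

def popSum {G : Type*} [AddCommGroup G] [DecidableEq G] (A B : Finset G) (i : ℕ) : Finset G :=
  (A + B).filter (fun g => i ≤ rAB A B g)

/-- Dyson transform: with `A(z) := A ∪ (z + B)` and `B(z) := A ∩ (z + B)`,
we have `|A(z)| + |B(z)| = |A| + |B|`,
`r_{A, z+B}(g) = r_{A(z),B(z)}(g) + r_{A \ (z+B), (z+B) \ A}(g)` for all `g`,
and `A(z) +_i B(z) ⊆ z + (A +_i B)` for all `i ≥ 1`. -/
theorem dyson_transform {G : Type*} [AddCommGroup G] [DecidableEq G]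
    (A B : Finset G) (z : G)
    (Az Bz : Finset G) (hAz : Az = A ∪ B.image (fun b => z + b))
    (hBz : Bz = A ∩ B.image (fun b => z + b)) :
    Az.card + Bz.card = A.card + B.card ∧
    (∀ g : G, rAB A (B.image (fun b => z + b)) g =
        rAB Az Bz g +
          rAB (A \ B.image (fun b => z + b)) (B.image (fun b => z + b) \ A) g) ∧
    (∀ i : ℕ, 1 ≤ i → popSum Az Bz i ⊆ (popSum A B i).image (fun g => z + g)) := by
  subst hAz hBz
  set C := B.image (fun b => z + b) with hC
  have hCB : C.card = B.card := card_image_of_injective _ (add_right_injective z)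
  have key : ∀ g, rAB A C g = rAB (A ∪ C) (A ∩ C) g + rAB (A \ C) (C \ A) g := by
    intro g
    unfold rAB
    set F := (A ×ˢ C).filter (fun p => p.1 + p.2 = g) with hF
    set T := ((A ∪ C) ×ˢ (A ∩ C)).filter (fun p => p.1 + p.2 = g) with hT
    have split1 : F.card = (F.filter (fun p => p.2 ∈ A)).card
        + (F.filter (fun p => ¬ p.2 ∈ A)).card :=
      (card_filter_add_card_filter_not _).symm
    have split2 : (F.filter (fun p => ¬ p.2 ∈ A)).card
        = ((F.filter (fun p => ¬ p.2 ∈ A)).filter (fun p => p.1 ∈ C)).card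
        + ((F.filter (fun p => ¬ p.2 ∈ A)).filter (fun p => ¬ p.1 ∈ C)).card :=
      (card_filter_add_card_filter_not _).symm
    have splitT : T.card = (T.filter (fun p => p.1 ∈ A)).card
        + (T.filter (fun p => ¬ p.1 ∈ A)).card :=
      (card_filter_add_card_filter_not _).symm
    have e1 : F.filter (fun p => p.2 ∈ A) = T.filter (fun p => p.1 ∈ A) := by
      ext ⟨x, y⟩
      simp only [hF, hT, mem_filter, mem_product, mem_union, mem_inter]
      tauto
    have e3 : (F.filter (fun p => ¬ p.2 ∈ A)).filter (fun p => ¬ p.1 ∈ C)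
        = ((A \ C) ×ˢ (C \ A)).filter (fun p => p.1 + p.2 = g) := by
      ext ⟨x, y⟩
      simp only [hF, mem_filter, mem_product, mem_sdiff]
      tauto
    have e2 : ((F.filter (fun p => ¬ p.2 ∈ A)).filter (fun p => p.1 ∈ C)).card
        = (T.filter (fun p => ¬ p.1 ∈ A)).card := by
      refine Finset.card_nbij' Prod.swap Prod.swap ?_ ?_ ?_ ?_
      · intro p hp
        simp only [hF, hT, mem_filter, mem_product, mem_union, mem_inter, Prod.fst_swap,
          Prod.snd_swap, coe_filter, Set.mem_setOf_eq] at hp ⊢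
        obtain ⟨⟨⟨⟨h1, h2⟩, h3⟩, h4⟩, h5⟩ := hp
        refine ⟨⟨⟨Or.inr h2, h1, h5⟩, ?_⟩, h4⟩
        rw [add_comm]; exact h3
      · intro p hp
        simp only [hF, hT, mem_filter, mem_product, mem_union, mem_inter, Prod.fst_swap,
          Prod.snd_swap, coe_filter, Set.mem_setOf_eq] at hp ⊢
        obtain ⟨⟨⟨h1, h2, h3⟩, h4⟩, h5⟩ := hp
        refine ⟨⟨⟨⟨h2, ?_⟩, ?_⟩, h5⟩, h3⟩
        · rcases h1 with h | h
          · exact absurd h h5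
          · exact h
        · rw [add_comm]; exact h4
      · intro p _; exact Prod.swap_swap p
      · intro p _; exact Prod.swap_swap p
    rw [split1, split2, splitT, e1, e2, e3]
    ring
  have hshift : ∀ g, rAB A C g = rAB A B (-z + g) := by
    intro g
    unfold rAB
    refine Finset.card_nbij' (fun p => (p.1, -z + p.2)) (fun p => (p.1, z + p.2)) ?_ ?_ ?_ ?_
    · intro p hp
      simp only [hC, mem_filter, mem_product, mem_image, coe_filter, Set.mem_setOf_eq] at hp ⊢
      obtain ⟨⟨h1, b, hb, hbe⟩, h3⟩ := hp
      rw [← hbe] at h3 ⊢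
      refine ⟨⟨h1, by simpa using hb⟩, ?_⟩
      rw [← h3]; abel
    · intro p hp
      simp only [mem_filter, mem_product, coe_filter, Set.mem_setOf_eq] at hp ⊢
      obtain ⟨⟨h1, h2⟩, h3⟩ := hp
      refine ⟨⟨h1, mem_image_of_mem _ h2⟩, ?_⟩
      rw [show p.1 + (z + p.2) = z + (p.1 + p.2) from by abel, h3]
      abel
    · intro p _; simp
    · intro p _; simp
  refine ⟨?_, key, ?_⟩
  · rw [card_union_add_card_inter, hCB]
  · intro i hi g hg
    simp only [popSum, mem_filter] at hg
    obtain ⟨_, hg2⟩ := hg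
    have h1 : i ≤ rAB A C g := by
      have := key g; omega
    have h2 : i ≤ rAB A B (-z + g) := by rwa [hshift g] at h1
    have hne : ((A ×ˢ B).filter (fun p => p.1 + p.2 = -z + g)).Nonempty := by
      rw [← card_pos]
      unfold rAB at h2
      omega
    obtain ⟨⟨a, b⟩, hp⟩ := hne
    simp only [mem_filter, mem_product] at hp
    obtain ⟨⟨ha, hb⟩, hab⟩ := hp
    simp only [mem_image]
    refine ⟨-z + g, ?_, by abel⟩
    simp only [popSum, mem_filter]
    exact ⟨by rw [← hab]; exact add_mem_add ha hb, h2⟩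
end

section
/- Let G be a finite abelian group, A, B ⊆ G subsets with |A| + |B| ≥ |G| + 1, and τ : A → G an injective map. Then the restricted sumset A +^τ B := {a + b : a ∈ A, b ∈ B, b ≠ τ(a)} satisfies |A +^τ B| ≥ |G| + (1 - 4√(3·min{|A|,|B|}))/3. -/
set_option linter.unusedSectionVars false


open Finset
open scoped Pointwise

/-- The restricted sumset `A +^τ B := {a + b : a ∈ A, b ∈ B, b ≠ τ a}`. -/
def restrictedSumset {G : Type*} [AddCommGroup G] [DecidableEq G]
    (A B : Finset G) (τ : G → G) : Finset G :=
  ((A ×ˢ B).filter (fun p => p.2 ≠ τ p.1)).image (fun p => p.1 + p.2)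

namespace RestrictedSumsetAux

variable {G : Type*} [AddCommGroup G] [Fintype G] [DecidableEq G]

/-- The "column fiber" of `g`: elements `β ∈ B` with `g - β ∈ A`. -/
def tv (A B : Finset G) (g : G) : Finset G := B.filter (fun β => g - β ∈ A)

/-- The "row fiber" of `g`: elements `s ∈ A` with `g - s ∈ B`. -/
def fib (A B : Finset G) (g : G) : Finset G := A.filter (fun s => g - s ∈ B)

lemma mem_tv {A B : Finset G} {g β : G} : β ∈ tv A B g ↔ β ∈ B ∧ g - β ∈ A :=
  Finset.mem_filter

lemma mem_fib {A B : Finset G} {g s : G} : s ∈ fib A B g ↔ s ∈ A ∧ g - s ∈ B :=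
  Finset.mem_filter

lemma fib_eq_tv_swap (A B : Finset G) (g : G) : fib A B g = tv B A g := rfl

lemma card_fib_eq {A B : Finset G} (g : G) :
    (fib A B g).card = (tv A B g).card := by
  apply Finset.card_bij (fun s _ => g - s)
  · intro s hs
    rw [mem_fib] at hs
    rw [mem_tv]
    exact ⟨hs.2, by simpa [sub_sub_cancel] using hs.1⟩
  · intro s₁ h₁ s₂ h₂ h
    exact sub_right_injective h
  · intro β hβ
    rw [mem_tv] at hβ
    exact ⟨g - β, by rw [mem_fib]; exact ⟨hβ.2, by simpa [sub_sub_cancel] using hβ.1⟩,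
      by simp [sub_sub_cancel]⟩

lemma not_mem_rss_iff {A B : Finset G} {τ : G → G} {g : G} :
    g ∉ restrictedSumset A B τ ↔ ∀ x ∈ A, ∀ β ∈ B, x + β = g → β = τ x := by
  unfold restrictedSumset
  simp only [Finset.mem_image, Finset.mem_filter, Finset.mem_product, Prod.exists,
    not_exists, not_and]
  constructor
  · intro H x hx β hβ hsum
    by_contra hne
    exact H x β ⟨⟨hx, hβ⟩, hne⟩ hsum
  · intro H a b hab hsum
    exact hab.2 (H a hab.1.1 b hab.1.2 hsum)

/-- For a bad `g` (not in the restricted sumset), each column element gives `τ`-value. -/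
lemma tau_eq {A B : Finset G} {τ : G → G} {g β : G}
    (hg : g ∉ restrictedSumset A B τ) (hβ : β ∈ tv A B g) : τ (g - β) = β := by
  rw [mem_tv] at hβ
  exact (not_mem_rss_iff.1 hg (g - β) hβ.2 β hβ.1 (by abel)).symm

/-- For a bad `g`, each row-fiber element `s` satisfies `τ s = g - s`. -/
lemma tau_eq' {A B : Finset G} {τ : G → G} {g s : G}
    (hg : g ∉ restrictedSumset A B τ) (hs : s ∈ fib A B g) : τ s = g - s := by
  rw [mem_fib] at hs
  exact (not_mem_rss_iff.1 hg s hs.1 (g - s) hs.2 (by abel)).symm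

/-- Column fibers of distinct bad elements are disjoint (uses injectivity of τ). -/
lemma tv_disjoint {A B : Finset G} {τ : G → G} (hτ : Set.InjOn τ A) {g h : G}
    (hg : g ∉ restrictedSumset A B τ) (hh : h ∉ restrictedSumset A B τ)
    (hgh : g ≠ h) : Disjoint (tv A B g) (tv A B h) := by
  rw [Finset.disjoint_left]
  intro β hβg hβh
  have h1 := tau_eq hg hβg
  have h2 := tau_eq hh hβh
  have hA1 : g - β ∈ A := (mem_tv.1 hβg).2
  have hA2 : h - β ∈ A := (mem_tv.1 hβh).2
  have : g - β = h - β := hτ hA1 hA2 (h1.trans h2.symm)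
  exact hgh (by
    have := sub_left_injective this
    exact this)

/-- Row fibers of distinct bad elements are disjoint (no injectivity needed). -/
lemma fib_disjoint {A B : Finset G} {τ : G → G} {g h : G}
    (hg : g ∉ restrictedSumset A B τ) (hh : h ∉ restrictedSumset A B τ)
    (hgh : g ≠ h) : Disjoint (fib A B g) (fib A B h) := by
  rw [Finset.disjoint_left]
  intro s hsg hsh
  have h1 := tau_eq' hg hsg
  have h2 := tau_eq' hh hsh
  have : g - s = h - s := h1.symm.trans h2
  exact hgh (by
    have : g - s + s = h - s + s := by rw [this]
    simpa [sub_add_cancel] using this)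

/-- Pigeonhole: every element has a large fiber. -/
lemma pigeon (A B : Finset G) (g : G) :
    A.card + B.card ≤ Fintype.card G + (tv A B g).card := by
  classical
  set Ag : Finset G := A.image (fun x => g - x) with hAg
  have hAgcard : Ag.card = A.card := Finset.card_image_of_injective _ sub_right_injective
  have htv : tv A B g = B ∩ Ag := by
    ext β
    simp only [mem_tv, Finset.mem_inter, hAg, Finset.mem_image]
    constructor
    · rintro ⟨hB, hA⟩
      exact ⟨hB, g - β, hA, by simp [sub_sub_cancel]⟩
    · rintro ⟨hB, x, hx, rfl⟩
      exact ⟨hB, by simpa [sub_sub_cancel] using hx⟩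
  have h1 : (B ∩ Ag).card + (B ∪ Ag).card = B.card + Ag.card :=
    Finset.card_inter_add_card_union B Ag
  have h2 : (B ∪ Ag).card ≤ Fintype.card G := by
    simpa using Finset.card_le_univ (B ∪ Ag)
  rw [htv]
  omega

/-- fact2: cross exclusion on the A side. -/
lemma fact2 {A B : Finset G} {τ : G → G} (hτ : Set.InjOn τ A) {g h β : G}
    (hg : g ∉ restrictedSumset A B τ) (hh : h ∉ restrictedSumset A B τ)
    (hgh : g ≠ h) (hβ : β ∈ tv A B h) : g - β ∉ A := by
  intro hA
  have hB : β ∈ B := (mem_tv.1 hβ).1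
  have h1 : β = τ (g - β) := not_mem_rss_iff.1 hg (g - β) hA β hB (by abel)
  have h2 : τ (h - β) = β := tau_eq hh hβ
  have : g - β = h - β := hτ hA (mem_tv.1 hβ).2 (h1.symm.trans h2.symm)
  exact hgh (sub_left_injective this)


/-- fact2': cross exclusion on the B side (no injectivity needed). -/
lemma fact2' {A B : Finset G} {τ : G → G} {g h s : G}
    (hg : g ∉ restrictedSumset A B τ) (hh : h ∉ restrictedSumset A B τ)
    (hgh : g ≠ h) (hs : s ∈ fib A B h) : g - s ∉ B := by
  intro hB
  have hA : s ∈ A := (mem_fib.1 hs).1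
  have h1 : g - s = τ s := not_mem_rss_iff.1 hg s hA (g - s) hB (by abel)
  have h2 : τ s = h - s := tau_eq' hh hs
  exact hgh (sub_left_injective (h1.trans h2))

/-- Near-periodicity of A along differences (holds for ALL g, h). -/
lemma L8 (A B : Finset G) (g h : G) :
    A.card + A.card + B.card ≤ Fintype.card G +
      (A.filter (fun x => x - (g - h) ∈ A)).card + (tv A B g).card + (tv A B h).card := by
  classical
  set δ := g - h with hδ
  set Ag : Finset G := A.image (fun x => g - x) with hAgdef
  set Ah : Finset G := A.image (fun x => h - x) with hAhdef
  have memAg : ∀ β, β ∈ Ag ↔ g - β ∈ A := by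
    intro β
    simp only [hAgdef, Finset.mem_image]
    constructor
    · rintro ⟨x, hx, rfl⟩; simpa [sub_sub_cancel] using hx
    · intro hx; exact ⟨g - β, hx, by simp [sub_sub_cancel]⟩
  have memAh : ∀ β, β ∈ Ah ↔ h - β ∈ A := by
    intro β
    simp only [hAhdef, Finset.mem_image]
    constructor
    · rintro ⟨x, hx, rfl⟩; simpa [sub_sub_cancel] using hx
    · intro hx; exact ⟨h - β, hx, by simp [sub_sub_cancel]⟩
  have hAgcard : Ag.card = A.card := Finset.card_image_of_injective _ sub_right_injective
  have hAhcard : Ah.card = A.card := Finset.card_image_of_injective _ sub_right_injective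
  set Ug : Finset G := Ag.filter (fun x => x ∉ B) with hUg
  set Uh : Finset G := Ah.filter (fun x => x ∉ B) with hUh
  have hsplitg : (Ag.filter (fun x => x ∈ B)).card + Ug.card = Ag.card := by
    rw [hUg]
    exact Finset.card_filter_add_card_filter_not (p := fun x => x ∈ B)
  have hsplith : (Ah.filter (fun x => x ∈ B)).card + Uh.card = Ah.card := by
    rw [hUh]
    exact Finset.card_filter_add_card_filter_not (p := fun x => x ∈ B)
  have htvg : Ag.filter (fun x => x ∈ B) = tv A B g := by
    ext β
    simp only [Finset.mem_filter, mem_tv, memAg]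
    tauto
  have htvh : Ah.filter (fun x => x ∈ B) = tv A B h := by
    ext β
    simp only [Finset.mem_filter, mem_tv, memAh]
    tauto
  have hiu : (Ug ∩ Uh).card + (Ug ∪ Uh).card = Ug.card + Uh.card :=
    Finset.card_inter_add_card_union Ug Uh
  have hsubB : Ug ∪ Uh ⊆ Bᶜ := by
    intro x hx
    rw [Finset.mem_union] at hx
    rw [Finset.mem_compl]
    rcases hx with hx | hx
    · exact (Finset.mem_filter.1 hx).2
    · exact (Finset.mem_filter.1 hx).2
  have hUB : (Ug ∪ Uh).card + B.card ≤ Fintype.card G := by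
    have h1 : (Ug ∪ Uh).card ≤ Bᶜ.card := Finset.card_le_card hsubB
    have h2 : Bᶜ.card + B.card = Fintype.card G := by
      have := Finset.card_add_card_compl B
      omega
    omega
  rw [htvg] at hsplitg
  rw [htvh] at hsplith
  have hinj : (Ug ∩ Uh).card ≤ (A.filter (fun x => x - δ ∈ A)).card := by
    apply Finset.card_le_card_of_injOn (fun x => g - x)
    · intro x hx
      simp only [Finset.mem_coe] at hx ⊢
      rw [Finset.mem_inter] at hx
      have h1 : g - x ∈ A := (memAg x).1 (Finset.mem_of_mem_filter x hx.1)
      have h2 : h - x ∈ A := (memAh x).1 (Finset.mem_of_mem_filter x hx.2)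
      rw [Finset.mem_filter]
      refine ⟨h1, ?_⟩
      have : g - x - δ = h - x := by rw [hδ]; abel
      rw [this]; exact h2
    · intro x₁ _ x₂ _ hx
      exact sub_right_injective hx
  omega

/-- Complement transfer identity. -/
lemma XID (A : Finset G) (δ : G) :
    Fintype.card G + (A.filter (fun x => x - δ ∈ A)).card =
      A.card + A.card + ((Aᶜ).filter (fun x => x - δ ∈ Aᶜ)).card := by
  classical
  have hsplit1 : (A.filter (fun x => x - δ ∈ A)).card
      + (A.filter (fun x => ¬ (x - δ ∈ A))).card = A.card :=
    Finset.card_filter_add_card_filter_not (p := fun x => x - δ ∈ A)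
  have hsplit2 : ((Aᶜ).filter (fun x => x - δ ∈ A)).card
      + ((Aᶜ).filter (fun x => ¬ (x - δ ∈ A))).card = (Aᶜ).card :=
    Finset.card_filter_add_card_filter_not (p := fun x => x - δ ∈ A)
  have hXδ : (Aᶜ).filter (fun x => ¬ (x - δ ∈ A)) = (Aᶜ).filter (fun x => x - δ ∈ Aᶜ) := by
    apply Finset.filter_congr
    intro x _
    simp [Finset.mem_compl]
  have huniv : ((Finset.univ : Finset G).filter (fun x => x - δ ∈ A)).card = A.card := by
    apply Finset.card_bij (fun x _ => x - δ)
    · intro x hx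
      exact (Finset.mem_filter.1 hx).2
    · intro x₁ _ x₂ _ hx
      exact sub_left_injective hx
    · intro y hy
      exact ⟨y + δ, Finset.mem_filter.2 ⟨Finset.mem_univ _, by simpa using hy⟩, by simp⟩
  have hsplitU : (A.filter (fun x => x - δ ∈ A)).card
      + ((Aᶜ).filter (fun x => x - δ ∈ A)).card
      = ((Finset.univ : Finset G).filter (fun x => x - δ ∈ A)).card := by
    rw [← Finset.card_union_of_disjoint]
    · congr 1
      ext x
      simp only [Finset.mem_union, Finset.mem_filter, Finset.mem_compl, Finset.mem_univ,
        true_and]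
      tauto
    · exact Finset.disjoint_filter_filter disjoint_compl_right
  have hcompl : A.card + (Aᶜ).card = Fintype.card G := Finset.card_add_card_compl A
  rw [hXδ] at hsplit2
  omega

/-- Near-periodicity for the complement of A. -/
lemma XNP (A B : Finset G) (g h : G) :
    B.card ≤ ((Aᶜ).filter (fun x => x - (g - h) ∈ Aᶜ)).card
      + (tv A B g).card + (tv A B h).card := by
  have h1 := L8 A B g h
  have h2 := XID A (g - h)
  omega



/-- KEY lemma: fibers over a translated chain inject into the boundary. -/
lemma keyL9 {A B : Finset G} {τ : G → G} (hτ : Set.InjOn τ A) {g h : G}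
    (hg : g ∉ restrictedSumset A B τ) (hh : h ∉ restrictedSumset A B τ) (hgh : g ≠ h) :
    (∑ t ∈ ((restrictedSumset A B τ)ᶜ).filter
        (fun t => t - (g - h) ∈ (restrictedSumset A B τ)ᶜ), (tv A B t).card)
      + A.card + B.card
      ≤ Fintype.card G + (tv A B g).card + (tv A B h).card := by
  classical
  set δ := g - h with hδ
  have hδ0 : δ ≠ 0 := sub_ne_zero_of_ne hgh
  set T : Finset G := (restrictedSumset A B τ)ᶜ with hT
  set Q : Finset G := T.filter (fun t => t - δ ∈ T) with hQ
  -- the biUnion of row fibers over Q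
  have hfibdisj : ∀ t₁ ∈ Q, ∀ t₂ ∈ Q, t₁ ≠ t₂ → Disjoint (fib A B t₁) (fib A B t₂) := by
    intro t₁ h₁ t₂ h₂ hne
    have b₁ : t₁ ∉ restrictedSumset A B τ := by
      have := (Finset.mem_filter.1 h₁).1
      rwa [hT, Finset.mem_compl] at this
    have b₂ : t₂ ∉ restrictedSumset A B τ := by
      have := (Finset.mem_filter.1 h₂).1
      rwa [hT, Finset.mem_compl] at this
    exact fib_disjoint b₁ b₂ hne
  have hcardU : (Q.biUnion (fib A B)).card = ∑ t ∈ Q, (fib A B t).card :=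
    Finset.card_biUnion hfibdisj
  have hsub : Q.biUnion (fib A B) ⊆ A.filter (fun s => ¬ (s - δ ∈ A)) := by
    intro s hs
    rw [Finset.mem_biUnion] at hs
    obtain ⟨t, htQ, hst⟩ := hs
    have hbt : t ∉ restrictedSumset A B τ := by
      have := (Finset.mem_filter.1 htQ).1
      rwa [hT, Finset.mem_compl] at this
    have hbt' : t - δ ∉ restrictedSumset A B τ := by
      have := (Finset.mem_filter.1 htQ).2
      rwa [hT, Finset.mem_compl] at this
    have htne : t - δ ≠ t := by
      intro hcontra
      exact hδ0 (sub_eq_self.mp hcontra)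
    have hsA : s ∈ A := (mem_fib.1 hst).1
    have hβ : t - s ∈ tv A B t := by
      rw [mem_tv]
      exact ⟨(mem_fib.1 hst).2, by simpa [sub_sub_cancel] using hsA⟩
    have := fact2 hτ hbt' hbt htne hβ
    rw [Finset.mem_filter]
    refine ⟨hsA, ?_⟩
    have heq : t - δ - (t - s) = s - δ := by abel
    rw [heq] at this
    exact this
  have hsum : ∑ t ∈ Q, (tv A B t).card ≤ (A.filter (fun s => ¬ (s - δ ∈ A))).card := by
    have h1 : ∑ t ∈ Q, (fib A B t).card ≤ (A.filter (fun s => ¬ (s - δ ∈ A))).card := by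
      rw [← hcardU]
      exact Finset.card_le_card hsub
    calc ∑ t ∈ Q, (tv A B t).card = ∑ t ∈ Q, (fib A B t).card := by
          apply Finset.sum_congr rfl
          intro t _
          exact (card_fib_eq t).symm
      _ ≤ _ := h1
  have hsplit : (A.filter (fun x => x - δ ∈ A)).card
      + (A.filter (fun x => ¬ (x - δ ∈ A))).card = A.card :=
    Finset.card_filter_add_card_filter_not (p := fun x => x - δ ∈ A)
  have h8 := L8 A B g h
  rw [← hδ] at h8
  omega

/-- The bad set is a Sidon set. -/
lemma sidon {A B : Finset G} {τ : G → G} (hτ : Set.InjOn τ A)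
    (hcard : Fintype.card G + 1 ≤ A.card + B.card) {g h s t : G}
    (hg : g ∈ (restrictedSumset A B τ)ᶜ) (hh : h ∈ (restrictedSumset A B τ)ᶜ)
    (hs : s ∈ (restrictedSumset A B τ)ᶜ) (ht : t ∈ (restrictedSumset A B τ)ᶜ)
    (hgh : g ≠ h) (hst : s ≠ t) (heq : g - h = s - t) : g = s ∧ h = t := by
  classical
  have hg' := Finset.mem_compl.1 hg
  have hh' := Finset.mem_compl.1 hh
  have hs' := Finset.mem_compl.1 hs
  have ht' := Finset.mem_compl.1 ht
  by_cases hgs : g = s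
  · subst hgs
    have h1 : g - h = g - t := heq
    exact ⟨rfl, sub_right_injective h1⟩
  · exfalso
    have hth : t ≠ h := by
      intro hth
      subst hth
      exact hgs (by
        have h1 : g - t = s - t := heq
        exact sub_left_injective h1)
    have k1 := keyL9 hτ hs' ht' hst
    have k2 := keyL9 hτ hh' hg' hgh.symm
    have hsQ : s ∈ ((restrictedSumset A B τ)ᶜ).filter
        (fun x => x - (s - t) ∈ (restrictedSumset A B τ)ᶜ) := by
      rw [Finset.mem_filter]
      exact ⟨hs, by simpa using ht⟩
    have hgQ : g ∈ ((restrictedSumset A B τ)ᶜ).filter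
        (fun x => x - (s - t) ∈ (restrictedSumset A B τ)ᶜ) := by
      rw [Finset.mem_filter]
      refine ⟨hg, ?_⟩
      have hge : g - (s - t) = h := by rw [← heq]; abel
      rw [hge]; exact hh
    have hpair1 : (tv A B s).card + (tv A B g).card
        ≤ ∑ x ∈ ((restrictedSumset A B τ)ᶜ).filter
            (fun x => x - (s - t) ∈ (restrictedSumset A B τ)ᶜ), (tv A B x).card := by
      have hsub : ({s, g} : Finset G) ⊆ ((restrictedSumset A B τ)ᶜ).filter
          (fun x => x - (s - t) ∈ (restrictedSumset A B τ)ᶜ) := by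
        intro x hx
        rw [Finset.mem_insert, Finset.mem_singleton] at hx
        rcases hx with rfl | rfl
        · exact hsQ
        · exact hgQ
      have hps := Finset.sum_pair (f := fun x => (tv A B x).card) (Ne.symm hgs)
      calc (tv A B s).card + (tv A B g).card
          = ∑ x ∈ ({s, g} : Finset G), (tv A B x).card := hps.symm
        _ ≤ _ := Finset.sum_le_sum_of_subset hsub
    have hhQ : h ∈ ((restrictedSumset A B τ)ᶜ).filter
        (fun x => x - (h - g) ∈ (restrictedSumset A B τ)ᶜ) := by
      rw [Finset.mem_filter]
      refine ⟨hh, ?_⟩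
      have hge : h - (h - g) = g := by abel
      rw [hge]; exact hg
    have htQ : t ∈ ((restrictedSumset A B τ)ᶜ).filter
        (fun x => x - (h - g) ∈ (restrictedSumset A B τ)ᶜ) := by
      rw [Finset.mem_filter]
      refine ⟨ht, ?_⟩
      have hs2 : s = g - h + t := by rw [heq]; abel
      have hge : t - (h - g) = s := by rw [hs2]; abel
      rw [hge]; exact hs
    have hpair2 : (tv A B h).card + (tv A B t).card
        ≤ ∑ x ∈ ((restrictedSumset A B τ)ᶜ).filter
            (fun x => x - (h - g) ∈ (restrictedSumset A B τ)ᶜ), (tv A B x).card := by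
      have hsub : ({h, t} : Finset G) ⊆ ((restrictedSumset A B τ)ᶜ).filter
          (fun x => x - (h - g) ∈ (restrictedSumset A B τ)ᶜ) := by
        intro x hx
        rw [Finset.mem_insert, Finset.mem_singleton] at hx
        rcases hx with rfl | rfl
        · exact hhQ
        · exact htQ
      have hps := Finset.sum_pair (f := fun x => (tv A B x).card) (Ne.symm hth)
      calc (tv A B h).card + (tv A B t).card
          = ∑ x ∈ ({h, t} : Finset G), (tv A B x).card := hps.symm
        _ ≤ _ := Finset.sum_le_sum_of_subset hsub
    omega


/-- Energy identity: total autocorrelation mass of `W` equals `|W|²`. -/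
lemma energy_total (W : Finset G) :
    ∑ δ : G, (W.filter (fun x => x - δ ∈ W)).card = W.card * W.card := by
  classical
  have h1 : ∀ δ : G, (W.filter (fun x => x - δ ∈ W)).card
      = ∑ x ∈ W, (if x - δ ∈ W then 1 else 0) := by
    intro δ
    rw [Finset.card_filter]
  calc ∑ δ : G, (W.filter (fun x => x - δ ∈ W)).card
      = ∑ δ : G, ∑ x ∈ W, (if x - δ ∈ W then 1 else 0) := by
        apply Finset.sum_congr rfl
        intro δ _
        exact h1 δ
    _ = ∑ x ∈ W, ∑ δ : G, (if x - δ ∈ W then 1 else 0) := Finset.sum_comm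
    _ = ∑ x ∈ W, W.card := by
        apply Finset.sum_congr rfl
        intro x _
        rw [← Finset.card_filter]
        apply Finset.card_bij (fun δ _ => x - δ)
        · intro δ hδ
          exact (Finset.mem_filter.1 hδ).2
        · intro δ₁ _ δ₂ _ hδ
          exact sub_right_injective hδ
        · intro w hw
          exact ⟨x - w, Finset.mem_filter.2 ⟨Finset.mem_univ _, by simpa [sub_sub_cancel] using hw⟩,
            by simp [sub_sub_cancel]⟩
    _ = W.card * W.card := by rw [Finset.sum_const, smul_eq_mul]

/-- Generic side bound via the energy of `W`. -/
lemma side_bound (T W : Finset G) (r : G → ℕ) (c : ℕ)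
    (hnp : ∀ g ∈ T, ∀ h ∈ T, g ≠ h →
      c ≤ (W.filter (fun x => x - (g - h) ∈ W)).card + r g + r h)
    (hsidon : ∀ g ∈ T, ∀ h ∈ T, ∀ s ∈ T, ∀ t ∈ T,
      g ≠ h → s ≠ t → g - h = s - t → g = s ∧ h = t)
    (hR : ∑ g ∈ T, r g ≤ c)
    (hWc : W.card + 1 ≤ c) :
    (T.card - 1) * (T.card - 2) + 1 ≤ c := by
  classical
  set k := T.card with hk
  rcases Nat.lt_or_ge k 3 with hk2 | hk3
  · have : k - 2 = 0 := by omega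
    rw [this, Nat.mul_zero]
    omega
  -- k ≥ 3
  set F : G → ℕ := fun δ => (W.filter (fun x => x - δ ∈ W)).card with hF
  set D2 : Finset (G × G) := (T ×ˢ T).filter (fun p => ¬ (p.1 = p.2)) with hD2
  set DG : Finset (G × G) := (T ×ˢ T).filter (fun p => p.1 = p.2) with hDG
  have hmemD2 : ∀ p : G × G, p ∈ D2 ↔ p.1 ∈ T ∧ p.2 ∈ T ∧ p.1 ≠ p.2 := by
    intro p
    rw [hD2, Finset.mem_filter, Finset.mem_product]
    tauto
  have hDGcard : DG.card = k := by
    rw [hk]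
    apply Finset.card_bij (fun (p : G × G) _ => p.1)
    · intro p hp
      rw [hDG, Finset.mem_filter, Finset.mem_product] at hp
      exact hp.1.1
    · intro p₁ h₁ p₂ h₂ h
      rw [hDG, Finset.mem_filter] at h₁ h₂
      have := h₁.2
      have := h₂.2
      ext
      · exact h
      · rw [← h₁.2, ← h₂.2, h]
    · intro a ha
      exact ⟨(a, a), by rw [hDG, Finset.mem_filter, Finset.mem_product]; exact ⟨⟨ha, ha⟩, rfl⟩, rfl⟩
  have hsplitcard : DG.card + D2.card = k * k := by
    rw [hDG, hD2]
    rw [Finset.card_filter_add_card_filter_not (p := fun p : G × G => p.1 = p.2)]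
    rw [Finset.card_product, hk]
  -- main inequality summed over D2
  have hmain : D2.card * c ≤ (∑ p ∈ D2, F (p.1 - p.2)) + ∑ p ∈ D2, (r p.1 + r p.2) := by
    have h1 : ∑ p ∈ D2, c ≤ ∑ p ∈ D2, (F (p.1 - p.2) + (r p.1 + r p.2)) := by
      apply Finset.sum_le_sum
      intro p hp
      rw [hmemD2] at hp
      have h2 := hnp p.1 hp.1 p.2 hp.2.1 hp.2.2
      simp only [hF]
      omega
    rw [Finset.sum_const, smul_eq_mul, Finset.sum_add_distrib] at h1
    omega
  -- bound the energy part
  have hF0 : F 0 = W.card := by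
    have heq : W.filter (fun x => x - (0 : G) ∈ W) = W := by
      apply Finset.filter_true_of_mem
      intro x hx
      simpa using hx
    simp only [hF]
    rw [heq]
  have hFsum : (∑ p ∈ D2, F (p.1 - p.2)) + W.card ≤ W.card * W.card := by
    have hinj : Set.InjOn (fun p : G × G => p.1 - p.2) D2 := by
      intro p hp q hq hpq
      rw [Finset.mem_coe, hmemD2] at hp hq
      have := hsidon p.1 hp.1 p.2 hp.2.1 q.1 hq.1 q.2 hq.2.1 hp.2.2 hq.2.2 hpq
      exact Prod.ext this.1 this.2
    have himg : ∑ p ∈ D2, F (p.1 - p.2) = ∑ δ ∈ D2.image (fun p : G × G => p.1 - p.2), F δ :=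
      (Finset.sum_image (fun p hp q hq h => hinj hp hq h)).symm
    have hsub : D2.image (fun p : G × G => p.1 - p.2) ⊆ Finset.univ.erase 0 := by
      intro δ hδ
      rw [Finset.mem_image] at hδ
      obtain ⟨p, hp, rfl⟩ := hδ
      rw [hmemD2] at hp
      exact Finset.mem_erase.2 ⟨sub_ne_zero_of_ne hp.2.2, Finset.mem_univ _⟩
    have hle : ∑ δ ∈ D2.image (fun p : G × G => p.1 - p.2), F δ
        ≤ ∑ δ ∈ Finset.univ.erase 0, F δ := Finset.sum_le_sum_of_subset hsub
    have herase : (∑ δ ∈ Finset.univ.erase 0, F δ) + F 0 = ∑ δ : G, F δ :=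
      Finset.sum_erase_add _ _ (Finset.mem_univ 0)
    have htot : ∑ δ : G, F δ = W.card * W.card := energy_total W
    omega
  -- the fiber-sum part
  have hRR : (∑ p ∈ D2, (r p.1 + r p.2)) + 2 * (∑ g ∈ T, r g) = 2 * k * (∑ g ∈ T, r g) := by
    have hprod : ∑ p ∈ T ×ˢ T, (r p.1 + r p.2) = 2 * k * (∑ g ∈ T, r g) := by
      rw [Finset.sum_product]
      have hx : ∀ x ∈ T, ∑ y ∈ T, (r x + r y) = k * r x + ∑ g ∈ T, r g := by
        intro x _
        rw [Finset.sum_add_distrib, Finset.sum_const, smul_eq_mul, hk]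
      rw [Finset.sum_congr rfl hx, Finset.sum_add_distrib, ← Finset.mul_sum, Finset.sum_const,
        smul_eq_mul, hk]
      ring
    have hdg : ∑ p ∈ DG, (r p.1 + r p.2) = 2 * (∑ g ∈ T, r g) := by
      have : ∑ p ∈ DG, (r p.1 + r p.2) = ∑ g ∈ T, (r g + r g) := by
        apply Finset.sum_bij (fun (p : G × G) _ => p.1)
        · intro p hp
          rw [hDG, Finset.mem_filter, Finset.mem_product] at hp
          exact hp.1.1
        · intro p₁ h₁ p₂ h₂ h
          rw [hDG, Finset.mem_filter] at h₁ h₂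
          ext
          · exact h
          · rw [← h₁.2, ← h₂.2, h]
        · intro a ha
          exact ⟨(a, a),
            by rw [hDG, Finset.mem_filter, Finset.mem_product]; exact ⟨⟨ha, ha⟩, rfl⟩, rfl⟩
        · intro p hp
          rw [hDG, Finset.mem_filter] at hp
          rw [← hp.2]
      rw [this, Finset.sum_add_distrib]
      ring
    have hsplitsum : (∑ p ∈ DG, (r p.1 + r p.2)) + (∑ p ∈ D2, (r p.1 + r p.2))
        = ∑ p ∈ T ×ˢ T, (r p.1 + r p.2) := by
      rw [hDG, hD2]
      exact Finset.sum_filter_add_sum_filter_not (T ×ˢ T) (fun p : G × G => p.1 = p.2) _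
    omega
  -- final arithmetic
  obtain ⟨j, hj⟩ : ∃ j, k = j + 3 := ⟨k - 3, by omega⟩
  have hk1 : k - 1 = j + 2 := by omega
  have hk2' : k - 2 = j + 1 := by omega
  rw [hk1, hk2']
  by_contra hcon
  push_neg at hcon
  have hc : c ≤ (j + 2) * (j + 1) := by omega
  set Sr := ∑ g ∈ T, r g with hSr
  set SF := ∑ p ∈ D2, F (p.1 - p.2) with hSF
  set SR := ∑ p ∈ D2, (r p.1 + r p.2) with hSR
  -- D2.card = k*k - k;  main: D2.card * c ≤ SF + SR
  -- SR = 2(k-1) Sr ≤ 2(k-1) c ; so (k² - k)c ≤ SF + 2(k-1)c + ... derive SF ≥ (k-1)(k-2)c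
  have hD2card : D2.card = k * k - k := by omega
  have e1 : (k * k - k) * c ≤ SF + SR := by
    rw [← hD2card]
    exact hmain
  have e2 : SR + 2 * Sr = 2 * k * Sr := hRR
  have e3 : Sr ≤ c := hR
  have e4 : SF + W.card ≤ W.card * W.card := hFsum
  have e5 : W.card + 1 ≤ c := hWc
  -- SF ≥ ((j+1)(j+2)) * c
  have e6 : (j + 1) * (j + 2) * c ≤ SF := by
    have hkk : k * k - k = (j + 1) * (j + 2) + 2 * (j + 2) := by
      rw [hj]
      have : (j + 3) * (j + 3) = (j + 1) * (j + 2) + 2 * (j + 2) + (j + 3) := by ring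
      omega
    have h2k : SR ≤ 2 * (j + 2) * c := by
      have : SR = 2 * (j + 2) * Sr := by
        have h2 : 2 * k * Sr = 2 * (j + 2) * Sr + 2 * Sr := by rw [hj]; ring
        omega
      have h2 : 2 * (j + 2) * Sr ≤ 2 * (j + 2) * c := by
        apply Nat.mul_le_mul_left
        exact e3
      omega
    have expand : ((j + 1) * (j + 2) + 2 * (j + 2)) * c
        = (j + 1) * (j + 2) * c + 2 * (j + 2) * c := by ring
    rw [hkk, expand] at e1
    omega
  -- SF ≤ W.card * c - 2 * W.card  (from e4, e5)
  have e7 : SF + 2 * W.card ≤ W.card * c := by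
    have : W.card * (W.card + 1) ≤ W.card * c := Nat.mul_le_mul_left _ e5
    nlinarith
  -- c * c ≤ (j+1)(j+2) c ≤ SF ≤ W.card * c  ⇒ c ≤ W.card  contradiction
  have e8 : c * c ≤ (j + 1) * (j + 2) * c := by
    have hc' : c ≤ (j + 1) * (j + 2) := by
      calc c ≤ (j + 2) * (j + 1) := hc
        _ = (j + 1) * (j + 2) := by ring
    exact Nat.mul_le_mul_right c hc'
  have e9 : c * c ≤ W.card * c := by omega
  have hcpos : 0 < c := by omega
  have : c ≤ W.card := Nat.le_of_mul_le_mul_right e9 hcpos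
  omega


end RestrictedSumsetAux

/-- If `|A| + |B| ≥ |G| + 1` and `τ` is injective on `A`, then
`|A +^τ B| ≥ |G| + (1 - 4√(3 · min(|A|,|B|)))/3`. -/
theorem restricted_sumset_lower_bound {G : Type*} [AddCommGroup G] [Fintype G]
    [DecidableEq G] (A B : Finset G) (τ : G → G) (hτ : Set.InjOn τ A)
    (hcard : Fintype.card G + 1 ≤ A.card + B.card) :
    (Fintype.card G : ℝ) +
        (1 - 4 * Real.sqrt (3 * min (A.card : ℝ) (B.card : ℝ))) / 3 ≤
      ((restrictedSumset A B τ).card : ℝ) := by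
  classical
  open RestrictedSumsetAux in
  set n := Fintype.card G with hn
  set T : Finset G := (restrictedSumset A B τ)ᶜ with hT
  set k := T.card with hk
  set r : G → ℕ := fun g => (RestrictedSumsetAux.tv A B g).card with hr
  have hBn : B.card ≤ n := by
    rw [hn, ← Finset.card_univ]
    exact Finset.card_le_univ B
  have hAn : A.card ≤ n := by
    rw [hn, ← Finset.card_univ]
    exact Finset.card_le_univ A
  have ha1 : 1 ≤ A.card := by omega
  have hb1 : 1 ≤ B.card := by omega
  -- every bad element has a nonempty fiber
  have hr1 : ∀ g ∈ T, 1 ≤ r g := by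
    intro g _
    have := RestrictedSumsetAux.pigeon A B g
    rw [hr]
    simp only
    omega
  -- fiber sums
  have hdisjtv : ∀ g₁ ∈ T, ∀ g₂ ∈ T, g₁ ≠ g₂ →
      Disjoint (RestrictedSumsetAux.tv A B g₁) (RestrictedSumsetAux.tv A B g₂) := by
    intro g₁ h₁ g₂ h₂ hne
    exact RestrictedSumsetAux.tv_disjoint hτ (Finset.mem_compl.1 h₁) (Finset.mem_compl.1 h₂) hne
  have hdisjfib : ∀ g₁ ∈ T, ∀ g₂ ∈ T, g₁ ≠ g₂ →
      Disjoint (RestrictedSumsetAux.fib A B g₁) (RestrictedSumsetAux.fib A B g₂) := by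
    intro g₁ h₁ g₂ h₂ hne
    exact RestrictedSumsetAux.fib_disjoint (Finset.mem_compl.1 h₁) (Finset.mem_compl.1 h₂) hne
  have hRB : ∑ g ∈ T, r g ≤ B.card := by
    calc ∑ g ∈ T, r g = (T.biUnion (RestrictedSumsetAux.tv A B)).card :=
          (Finset.card_biUnion hdisjtv).symm
      _ ≤ B.card := by
          apply Finset.card_le_card
          intro β hβ
          rw [Finset.mem_biUnion] at hβ
          obtain ⟨g, _, hg⟩ := hβ
          exact (RestrictedSumsetAux.mem_tv.1 hg).1
  have hRA : ∑ g ∈ T, r g ≤ A.card := by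
    have h1 : ∑ g ∈ T, r g = ∑ g ∈ T, (RestrictedSumsetAux.fib A B g).card := by
      apply Finset.sum_congr rfl
      intro g _
      rw [hr]
      exact (RestrictedSumsetAux.card_fib_eq g).symm
    calc ∑ g ∈ T, r g = (T.biUnion (RestrictedSumsetAux.fib A B)).card := by
          rw [h1, Finset.card_biUnion hdisjfib]
      _ ≤ A.card := by
          apply Finset.card_le_card
          intro s hs
          rw [Finset.mem_biUnion] at hs
          obtain ⟨g, _, hg⟩ := hs
          exact (RestrictedSumsetAux.mem_fib.1 hg).1
  have hkR : k ≤ ∑ g ∈ T, r g := by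
    calc k = ∑ _g ∈ T, 1 := by rw [Finset.sum_const, smul_eq_mul, mul_one, hk]
      _ ≤ ∑ g ∈ T, r g := Finset.sum_le_sum hr1
  -- Sidon property
  have hsidon' : ∀ g ∈ T, ∀ h ∈ T, ∀ s ∈ T, ∀ t ∈ T,
      g ≠ h → s ≠ t → g - h = s - t → g = s ∧ h = t := by
    intro g hg h hh s hs t ht hgh hst heq
    exact RestrictedSumsetAux.sidon hτ hcard hg hh hs ht hgh hst heq
  -- side bounds
  have hside1 : (k - 1) * (k - 2) + 1 ≤ B.card := by
    apply RestrictedSumsetAux.side_bound T Aᶜ r B.card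
    · intro g _ h _ _
      have := RestrictedSumsetAux.XNP A B g h
      rw [hr]
      simpa using this
    · exact hsidon'
    · exact hRB
    · have : Aᶜ.card + A.card = n := by
        have := Finset.card_add_card_compl A
        rw [hn]
        omega
      omega
  have hside2 : (k - 1) * (k - 2) + 1 ≤ A.card := by
    apply RestrictedSumsetAux.side_bound T Bᶜ r A.card
    · intro g _ h _ _
      have h0 := RestrictedSumsetAux.XNP B A g h
      have e1 : RestrictedSumsetAux.tv B A g = RestrictedSumsetAux.fib A B g := rfl
      have e2 : RestrictedSumsetAux.tv B A h = RestrictedSumsetAux.fib A B h := rfl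
      rw [e1, e2] at h0
      rw [RestrictedSumsetAux.card_fib_eq, RestrictedSumsetAux.card_fib_eq] at h0
      rw [hr]
      simpa using h0
    · exact hsidon'
    · exact hRA
    · have : Bᶜ.card + B.card = n := by
        have := Finset.card_add_card_compl B
        rw [hn]
        omega
      omega
  -- numeric consolidation
  set M := min A.card B.card with hM
  have hM1 : 1 ≤ M := le_min ha1 hb1
  have hkM : k ≤ M := le_min (le_trans hkR hRA) (le_trans hkR hRB)
  have hmin1 : (k - 1) * (k - 2) + 1 ≤ M := le_min hside2 hside1
  have h48 : (3 * k + 1) ^ 2 ≤ 48 * M := by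
    rcases Nat.lt_or_ge k 3 with h3 | h3
    · interval_cases k
      · have e : (3 * 0 + 1 : ℕ) ^ 2 = 1 := by norm_num
        rw [e]
        omega
      · have e : (3 * 1 + 1 : ℕ) ^ 2 = 16 := by norm_num
        rw [e]
        omega
      · have e : (3 * 2 + 1 : ℕ) ^ 2 = 49 := by norm_num
        rw [e]
        omega
    · obtain ⟨j, hj⟩ : ∃ j, k = j + 3 := ⟨k - 3, by omega⟩
      have e1 : k - 1 = j + 2 := by omega
      have e2 : k - 2 = j + 1 := by omega
      rw [e1, e2] at hmin1
      have expand : (3 * k + 1) ^ 2 = 9 * (j * j) + 60 * j + 100 := by rw [hj]; ring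
      have h48' : 48 * ((j + 2) * (j + 1) + 1) = 48 * (j * j) + 144 * j + 144 := by ring
      have hMle : 48 * ((j + 2) * (j + 1) + 1) ≤ 48 * M := Nat.mul_le_mul_left 48 hmin1
      rw [expand]
      omega
  -- real arithmetic
  have hCcard : (restrictedSumset A B τ).card + k = n := by
    rw [hk, hT, hn]
    exact Finset.card_add_card_compl (restrictedSumset A B τ)
  have hmincast : min ((A.card : ℝ)) ((B.card : ℝ)) = (M : ℝ) := by
    rw [hM]
    push_cast
    rfl
  rw [hmincast]
  have hsqrt : (3 * (k : ℝ) + 1) ≤ 4 * Real.sqrt (3 * (M : ℝ)) := by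
    have h1' : (3 * (k : ℝ) + 1) ^ 2 ≤ 48 * (M : ℝ) := by exact_mod_cast h48
    have h2 : (3 * (k : ℝ) + 1) = Real.sqrt ((3 * (k : ℝ) + 1) ^ 2) := by
      rw [Real.sqrt_sq (by positivity)]
    rw [h2]
    have h3 : Real.sqrt ((3 * (k : ℝ) + 1) ^ 2) ≤ Real.sqrt (48 * (M : ℝ)) :=
      Real.sqrt_le_sqrt h1'
    have h4 : Real.sqrt (48 * (M : ℝ)) = 4 * Real.sqrt (3 * (M : ℝ)) := by
      have : (48 : ℝ) * (M : ℝ) = 16 * (3 * (M : ℝ)) := by ring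
      rw [this, show (16 : ℝ) = 4 ^ 2 by norm_num, Real.sqrt_mul (by positivity),
        Real.sqrt_sq (by norm_num)]
    rw [h4] at h3
    exact h3
  have hCk : ((restrictedSumset A B τ).card : ℝ) = (n : ℝ) - (k : ℝ) := by
    have : ((restrictedSumset A B τ).card : ℝ) + (k : ℝ) = (n : ℝ) := by
      exact_mod_cast congrArg (Nat.cast : ℕ → ℝ) hCcard
    linarith
  rw [hCk]
  linarith
end

section
/- Let t be a positive integer and G a finite abelian group with subsets A, B satisfying |A| + |B| ≥ |G| + 1, and let τ : A → G be any map. Then t·|A +^τ B| + |τ| ≥ Σ_{i=1}^t |A +_i B|, where |τ| := |{(a,b) ∈ A × B : τ(a) = b}| and A +^τ B := {a + b : a ∈ A, b ∈ B, b ≠ τ(a)}. -/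
open Finset
open scoped Pointwise

/-- `t|A +^τ B| + |τ| ≥ Σ_{i=1}^t |A +_i B|`, where
`|τ| = |{(a,b) ∈ A × B : τ(a) = b}|`. -/
theorem restricted_sumset_popSum_bound {G : Type*} [AddCommGroup G] [Fintype G]
    [DecidableEq G] (t : ℕ) (ht : 1 ≤ t) (A B : Finset G)
    (hcard : Fintype.card G + 1 ≤ A.card + B.card) (τ : G → G) :
    (∑ i ∈ Finset.Icc 1 t, (popSum A B i).card) ≤
      t * (restrictedSumset A B τ).card +
        ((A ×ˢ B).filter (fun p => τ p.1 = p.2)).card := by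

  set RS := restrictedSumset A B τ with hRS
  set s : G → ℕ := fun g =>
    (((A ×ˢ B).filter (fun p => τ p.1 = p.2)).filter (fun p => p.1 + p.2 = g)).card with hs
  -- |τ| = ∑ g, s g
  have hτ : ((A ×ˢ B).filter (fun p => τ p.1 = p.2)).card = ∑ g : G, s g := by
    apply Finset.card_eq_sum_card_fiberwise (f := fun p : G × G => p.1 + p.2)
      (t := Finset.univ)
    exact fun x _ => mem_univ _
  -- LHS rewrite
  have h1 : (∑ i ∈ Finset.Icc 1 t, (popSum A B i).card)
      = ∑ g : G, ((Finset.Icc 1 t).filter (fun i => g ∈ popSum A B i)).card := by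
    simp_rw [Finset.card_filter]
    rw [Finset.sum_comm]
    congr 1
    ext g
    rw [Finset.card_eq_sum_ones (popSum A B g), ← Finset.sum_filter,
      Finset.filter_mem_eq_inter, Finset.univ_inter]
  rw [h1, hτ]
  have hbound : ∀ g : G,
      ((Finset.Icc 1 t).filter (fun i => g ∈ popSum A B i)).card
        ≤ (if g ∈ RS then t else 0) + s g := by
    intro g
    by_cases hg : g ∈ RS
    · simp only [hg, if_true]
      calc ((Finset.Icc 1 t).filter (fun i => g ∈ popSum A B i)).card
          ≤ (Finset.Icc 1 t).card := Finset.card_filter_le _ _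
        _ = t := by simp
        _ ≤ t + s g := Nat.le_add_right _ _
    · simp only [hg, if_false, zero_add]
      -- rAB g ≤ s g
      have hrs : rAB A B g ≤ s g := by
        apply Finset.card_le_card
        intro p hp
        simp only [Finset.mem_filter] at hp ⊢
        refine ⟨⟨hp.1, ?_⟩, hp.2⟩
        by_contra hne
        exact hg (Finset.mem_image.mpr ⟨p, Finset.mem_filter.mpr ⟨hp.1,
          fun h => hne h.symm⟩, hp.2⟩)
      calc ((Finset.Icc 1 t).filter (fun i => g ∈ popSum A B i)).card
          ≤ (Finset.Icc 1 (rAB A B g)).card := by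
            apply Finset.card_le_card
            intro i hi
            simp only [Finset.mem_filter, Finset.mem_Icc, popSum, Finset.mem_filter] at hi ⊢
            exact ⟨hi.1.1, hi.2.2⟩
        _ = rAB A B g := by simp
        _ ≤ s g := hrs
  calc (∑ g : G, ((Finset.Icc 1 t).filter (fun i => g ∈ popSum A B i)).card)
      ≤ ∑ g : G, ((if g ∈ RS then t else 0) + s g) := Finset.sum_le_sum (fun g _ => hbound g)
    _ = (∑ g : G, if g ∈ RS then t else 0) + ∑ g : G, s g := Finset.sum_add_distrib
    _ = t * RS.card + ∑ g : G, s g := by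
        rw [Finset.sum_ite_mem, Finset.univ_inter, Finset.sum_const, smul_eq_mul, mul_comm]
end

section
/- Let A = -B be finite subsets of an abelian group G with H = H(A - A) = H(A) a finite subgroup, |A| = (s+1)|H| where t = s|H| + u with s ≥ 1 and 1 ≤ u ≤ |H| - 1. Then Σ_{i=1}^t |A +_i B| = |A|² - (|H| - u)|H| = t|A| + t|B| - t² - u(|H| - u). -/
open Finset
open scoped Pointwise

/-- The stabilizer `H(A) = {e : e + A = A}` of a finite set, as a set. -/
def stabSet {G : Type*} [AddCommGroup G] [DecidableEq G] (A : Finset G) : Set G :=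
  {e : G | A.image (fun a => e + a) = A}

section Aux
variable {G : Type*} [AddCommGroup G] [DecidableEq G]

lemma rAB_eq_card_filter (A B : Finset G) (hAB : A = -B) (g : G) :
    rAB A B g = (A.filter (fun a => a - g ∈ A)).card := by
  unfold rAB
  apply Finset.card_bij (fun p _ => p.1)
  · intro p hp
    simp only [mem_filter, mem_product] at hp ⊢
    refine ⟨hp.1.1, ?_⟩
    have h1 : p.1 - g = -p.2 := by rw [← hp.2]; abel
    rw [h1, hAB]
    simpa using hp.1.2
  · intro p hp q hq h
    simp only [mem_filter, mem_product] at hp hq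
    have h2 : p.2 = q.2 := by
      have := hp.2.trans hq.2.symm
      rw [h] at this
      exact add_left_cancel this
    exact Prod.ext h h2
  · intro a ha
    simp only [mem_filter] at ha
    refine ⟨(a, g - a), ?_, rfl⟩
    simp only [mem_filter, mem_product]
    refine ⟨⟨ha.1, ?_⟩, by abel⟩
    have h3 : a - g ∈ -B := hAB ▸ ha.2
    rw [Finset.mem_neg'] at h3
    simpa using h3

lemma sum_rAB (A B : Finset G) : ∑ g ∈ A + B, rAB A B g = A.card * B.card := by
  rw [← Finset.card_product]
  exact (Finset.card_eq_sum_card_fiberwise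
    (f := fun p : G × G => p.1 + p.2) (t := A + B)
    (fun p hp => by
      rw [Finset.mem_coe, Finset.mem_product] at hp
      exact Finset.mem_coe.2 (Finset.add_mem_add hp.1 hp.2))).symm

lemma sum_popSum (A B : Finset G) (t : ℕ) :
    ∑ i ∈ Finset.Icc 1 t, (popSum A B i).card = ∑ g ∈ A + B, min t (rAB A B g) := by
  unfold popSum
  simp only [Finset.card_filter]
  rw [Finset.sum_comm]
  refine Finset.sum_congr rfl fun g _ => ?_
  rw [← Finset.card_filter]
  have h1 : (Finset.Icc 1 t).filter (fun i => i ≤ rAB A B g)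
      = Finset.Icc 1 (min t (rAB A B g)) := by
    ext i
    simp only [mem_filter, mem_Icc]
    omega
  rw [h1, Nat.card_Icc]
  omega
end Aux

/-- For `A = -B` with `H = H(A - A) = H(A)` a finite subgroup, `|A| = (s+1)|H|`
and `t = s|H| + u` with `s ≥ 1`, `1 ≤ u ≤ |H| - 1`, we have
`Σ_{i=1}^t |A +_i B| = |A|² - (|H| - u)|H| = t|A| + t|B| - t² - u(|H| - u)`. -/
theorem neg_example_popSum {G : Type*} [AddCommGroup G] [DecidableEq G]
    (H : AddSubgroup G) (Hf : Finset G) (hHf : ↑Hf = (H : Set G))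
    (B : Finset G) (A : Finset G) (hAB : A = -B)
    (hstab1 : stabSet (A - A) = (H : Set G)) (hstab2 : stabSet A = (H : Set G))
    (s u t : ℕ) (hs : 1 ≤ s) (hu1 : 1 ≤ u) (hu2 : u ≤ Hf.card - 1)
    (hcardA : A.card = (s + 1) * Hf.card) (htdef : t = s * Hf.card + u) :
    (∑ i ∈ Finset.Icc 1 t, ((popSum A B i).card : ℤ)) =
        (A.card : ℤ) ^ 2 - ((Hf.card : ℤ) - u) * Hf.card ∧
      (A.card : ℤ) ^ 2 - ((Hf.card : ℤ) - u) * Hf.card =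
        (t : ℤ) * A.card + t * B.card - t ^ 2 - u * ((Hf.card : ℤ) - u) := by
  have hA' : A.card = s * Hf.card + Hf.card := by rw [hcardA]; ring
  have hmem : ∀ x : G, x ∈ Hf ↔ x ∈ H := by
    intro x
    rw [← Finset.mem_coe, hHf, SetLike.mem_coe]
  have hstabA : ∀ e : G, A.image (fun a => e + a) = A ↔ e ∈ Hf := by
    intro e
    rw [hmem e, ← SetLike.mem_coe, ← hstab2]
    exact Iff.rfl
  have hact : ∀ e ∈ Hf, ∀ a ∈ A, e + a ∈ A := by
    intro e he a ha
    have h1 := (hstabA e).2 he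
    rw [← h1]
    exact Finset.mem_image_of_mem _ ha
  have hnegmem : ∀ g ∈ Hf, -g ∈ Hf := by
    intro g hg
    exact (hmem _).2 (neg_mem ((hmem _).1 hg))
  have hfull : ∀ g ∈ Hf, A.filter (fun a => a - g ∈ A) = A := by
    intro g hg
    apply Finset.filter_true_of_mem
    intro a ha
    have h1 : -g + a ∈ A := hact _ (hnegmem g hg) _ ha
    have h2 : -g + a = a - g := by abel
    rwa [h2] at h1
  have key : ∀ g : G, t + 1 ≤ (A.filter (fun a => a - g ∈ A)).card ↔ g ∈ Hf := by
    intro g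
    constructor
    · intro hge
      have hTA : A.filter (fun a => a - g ∈ A) = A := by
        by_contra hne
        have hss : A.filter (fun a => a - g ∈ A) ⊂ A :=
          (Finset.filter_subset _ _).ssubset_of_ne hne
        obtain ⟨a, haA, haT⟩ := Finset.exists_of_ssubset hss
        have hdisj : Disjoint (Hf.image (fun e => e + a)) (A.filter (fun a => a - g ∈ A)) := by
          rw [Finset.disjoint_left]
          rintro x hx hxT
          obtain ⟨e, he, rfl⟩ := Finset.mem_image.1 hx
          simp only [Finset.mem_filter] at hxT
          apply haT
          simp only [Finset.mem_filter]
          refine ⟨haA, ?_⟩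
          have h1 : -e + (e + a - g) ∈ A := hact _ (hnegmem e he) _ hxT.2
          have h2 : -e + (e + a - g) = a - g := by abel
          rwa [h2] at h1
        have hsub2 : Hf.image (fun e => e + a) ∪ A.filter (fun a => a - g ∈ A) ⊆ A := by
          apply Finset.union_subset
          · intro x hx
            obtain ⟨e, he, rfl⟩ := Finset.mem_image.1 hx
            exact hact _ he _ haA
          · exact Finset.filter_subset _ _
        have hcardim : (Hf.image (fun e => e + a)).card = Hf.card :=
          Finset.card_image_of_injective _ (add_left_injective a)
        have hle := Finset.card_le_card hsub2
        rw [Finset.card_union_of_disjoint hdisj, hcardim] at hle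
        omega
      have himg : A.image (fun a => -g + a) = A := by
        apply Finset.eq_of_subset_of_card_le
        · intro x hx
          obtain ⟨a, ha, rfl⟩ := Finset.mem_image.1 hx
          have h1 : a ∈ A.filter (fun a => a - g ∈ A) := by rw [hTA]; exact ha
          have h2 : -g + a = a - g := by abel
          rw [h2]
          exact (Finset.mem_filter.1 h1).2
        · rw [Finset.card_image_of_injective _ (add_right_injective (-g))]
      have h3 : -g ∈ Hf := (hstabA _).1 himg
      have h4 := hnegmem _ h3
      rwa [neg_neg] at h4
    · intro hg
      rw [hfull g hg]
      omega
  have hBA : B.card = A.card := by rw [hAB, Finset.card_neg]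
  have hrT : ∀ g, rAB A B g = (A.filter (fun a => a - g ∈ A)).card :=
    rAB_eq_card_filter A B hAB
  have hHfsub : Hf ⊆ A + B := by
    intro g hg
    have hpos : 0 < rAB A B g := by
      rw [hrT, hfull g hg]; omega
    obtain ⟨p, hp⟩ := Finset.card_pos.1 hpos
    simp only [rAB, Finset.mem_filter, Finset.mem_product] at hp
    rw [← hp.2]
    exact Finset.add_mem_add hp.1.1 hp.1.2
  have hside : ∀ g ∈ A + B, rAB A B g - t ≠ 0 → g ∈ Hf := by
    intro g _ hne
    apply (key g).1
    rw [← hrT]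
    omega
  have hfe : (A + B).filter (fun g => g ∈ Hf) = Hf := by
    ext g
    simp only [Finset.mem_filter]
    exact ⟨fun h => h.2, fun h => ⟨hHfsub h, h⟩⟩
  have hsum3 : ∑ g ∈ A + B, (rAB A B g - t) = Hf.card * (A.card - t) := by
    rw [← Finset.sum_filter_of_ne hside, hfe]
    rw [Finset.sum_congr rfl (fun g hg => by rw [hrT, hfull g hg]), Finset.sum_const,
      smul_eq_mul]
  have htot : ∑ g ∈ A + B, rAB A B g
      = (∑ g ∈ A + B, min t (rAB A B g)) + ∑ g ∈ A + B, (rAB A B g - t) := by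
    rw [← Finset.sum_add_distrib]
    exact Finset.sum_congr rfl fun g _ => by omega
  have hAt : A.card - t = Hf.card - u := by omega
  have hunat : u ≤ Hf.card := by omega
  set X := ∑ g ∈ A + B, min t (rAB A B g) with hX
  have hnat : X + Hf.card * (Hf.card - u) = A.card * A.card := by
    rw [hX, ← hAt, ← hsum3, ← htot, sum_rAB, hBA]
  have hcast : (∑ i ∈ Finset.Icc 1 t, ((popSum A B i).card : ℤ))
      = ((X : ℕ) : ℤ) := by
    rw [← Nat.cast_sum, sum_popSum, hX]
  constructor
  · rw [hcast]
    zify [hunat] at hnat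
    linear_combination hnat
  · rw [hBA, hcardA, htdef]
    push_cast
    ring
end
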